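/- One functional iteration step doubles the formal order of the backward error: if Q₁ = Q - ε²Φ(Q) where Φ(Q) = 5(Q')²/(16Q²) - Q''/(4Q), and Q is C⁴ and positive with Q₁ positive, then Φ(Q₁) = Φ(Q) + O(ε²) pointwise as ε → 0; consequently Q₁ + ε²Φ(Q₁) = Q + O(ε⁴) pointwise, i.e., the WKB solution of the modified problem has residual O(ε⁴) relative to the original potential Q. -/

import Mathlib

open Filter Asymptotics

/-- The WKB backward-error map `Φ(Q) = 5(Q')²/(16Q²) - Q''/(4Q)`. -/
noncomputable def wkbPhi (G : ℝ → ℝ) : ℝ → ℝ :=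
  fun t => 5 * (deriv G t)^2 / (16 * (G t)^2) - deriv (deriv G) t / (4 * G t)

/-- **One functional iteration doubles the formal order of the backward error.**
If `Q₁ = Q - ε² Φ(Q)` with `Q` C⁴ on an open set `I` and positive at `x ∈ I`, then
pointwise as `ε → 0`, `Φ(Q₁)(x) = Φ(Q)(x) + O(ε²)`, and consequently
`(Q₁ + ε² Φ(Q₁))(x) = Q(x) + O(ε⁴)`: the WKB solution of the modified problem has
backward error `O(ε⁴)` relative to the original potential. -/
theorem wkb_iteration_order_four
    (I : Set ℝ) (hI : IsOpen I) (x : ℝ) (hx : x ∈ I)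
    (Q : ℝ → ℝ) (hQ : ContDiffOn ℝ 4 Q I) (hQpos : 0 < Q x) :
    (fun ε : ℝ => wkbPhi (fun t => Q t - ε^2 * wkbPhi Q t) x - wkbPhi Q x)
        =O[nhds 0] (fun ε : ℝ => ε^2) ∧
    (fun ε : ℝ => ((fun t => Q t - ε^2 * wkbPhi Q t) x
        + ε^2 * wkbPhi (fun t => Q t - ε^2 * wkbPhi Q t) x) - Q x)
        =O[nhds 0] (fun ε : ℝ => ε^4) := by
  classical
  -- open neighborhood where Q > 0
  set U : Set ℝ := I ∩ Q ⁻¹' Set.Ioi 0 with hUdef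
  have hUopen : IsOpen U := hQ.continuousOn.isOpen_inter_preimage hI isOpen_Ioi
  have hxU : x ∈ U := ⟨hx, hQpos⟩
  have hUI : U ⊆ I := Set.inter_subset_left
  have hQposU : ∀ t ∈ U, 0 < Q t := fun t ht => ht.2
  have hQU : ContDiffOn ℝ 4 Q U := hQ.mono hUI
  have hQ' : ContDiffOn ℝ 3 (deriv Q) U :=
    hQU.deriv_of_isOpen hUopen (by norm_num)
  have hQ'' : ContDiffOn ℝ 2 (deriv (deriv Q)) U :=
    hQ'.deriv_of_isOpen hUopen (by norm_num)
  -- P := Φ(Q) is C² on U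
  have hPC : ContDiffOn ℝ 2 (wkbPhi Q) U := by
    unfold wkbPhi
    apply ContDiffOn.sub
    · exact ContDiffOn.div (contDiffOn_const.mul ((hQ'.of_le (by norm_num)).pow 2))
        (contDiffOn_const.mul ((hQU.of_le (by norm_num)).pow 2))
        (fun t ht => by have := hQposU t ht; positivity)
    · exact ContDiffOn.div hQ''
        (contDiffOn_const.mul (hQU.of_le (by norm_num)))
        (fun t ht => by have := hQposU t ht; positivity)
  have hP' : ContDiffOn ℝ 1 (deriv (wkbPhi Q)) U :=
    hPC.deriv_of_isOpen hUopen (by norm_num)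
  -- differentiability facts
  have hdiffAt : ∀ {n : WithTop ℕ∞} {g : ℝ → ℝ}, ContDiffOn ℝ n g U → 1 ≤ n → ∀ t ∈ U,
      DifferentiableAt ℝ g t := fun hg hn t ht =>
    (hg.contDiffAt (hUopen.mem_nhds ht)).differentiableAt (zero_lt_one.trans_le hn).ne'
  have hQd : ∀ t ∈ U, DifferentiableAt ℝ Q t := hdiffAt hQU (by norm_num)
  have hQ'd : ∀ t ∈ U, DifferentiableAt ℝ (deriv Q) t := hdiffAt hQ' (by norm_num)
  have hPd : ∀ t ∈ U, DifferentiableAt ℝ (wkbPhi Q) t := hdiffAt hPC (by norm_num)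
  have hP'd : ∀ t ∈ U, DifferentiableAt ℝ (deriv (wkbPhi Q)) t := hdiffAt hP' (by norm_num)
  -- first derivative of Q₁
  have hd1 : ∀ ε : ℝ, ∀ t ∈ U,
      deriv (fun s => Q s - ε^2 * wkbPhi Q s) t
        = deriv Q t - ε^2 * deriv (wkbPhi Q) t := by
    intro ε t ht
    rw [deriv_fun_sub (hQd t ht) ((hPd t ht).const_mul _), deriv_const_mul _ (hPd t ht)]
  -- second derivative of Q₁ at x
  have hd2 : ∀ ε : ℝ,
      deriv (deriv (fun s => Q s - ε^2 * wkbPhi Q s)) x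
        = deriv (deriv Q) x - ε^2 * deriv (deriv (wkbPhi Q)) x := by
    intro ε
    have hev : deriv (fun s => Q s - ε^2 * wkbPhi Q s)
        =ᶠ[nhds x] fun t => deriv Q t - ε^2 * deriv (wkbPhi Q) t := by
      filter_upwards [hUopen.mem_nhds hxU] with t ht using hd1 ε t ht
    rw [hev.deriv_eq, deriv_fun_sub (hQ'd x hxU) ((hP'd x hxU).const_mul _),
      deriv_const_mul _ (hP'd x hxU)]
  -- the rational function in s = ε²
  set F : ℝ → ℝ := fun s =>
    5 * (deriv Q x - s * deriv (wkbPhi Q) x)^2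
        / (16 * (Q x - s * wkbPhi Q x)^2)
      - (deriv (deriv Q) x - s * deriv (deriv (wkbPhi Q)) x)
        / (4 * (Q x - s * wkbPhi Q x)) with hFdef
  have hFeq : ∀ ε : ℝ, wkbPhi (fun t => Q t - ε^2 * wkbPhi Q t) x = F (ε^2) := by
    intro ε
    show _ - _ = _
    rw [show deriv (fun t => Q t - ε^2 * wkbPhi Q t) x
        = deriv Q x - ε^2 * deriv (wkbPhi Q) x from hd1 ε x hxU, hd2 ε]
  have hF0 : F 0 = wkbPhi Q x := by
    simp [hFdef, wkbPhi]
  have hFd : DifferentiableAt ℝ F 0 := by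
    have h1 : (16 * (Q x - (0:ℝ) * wkbPhi Q x)^2) ≠ 0 := by
      simp only [zero_mul, sub_zero]; positivity
    have h2 : (4 * (Q x - (0:ℝ) * wkbPhi Q x)) ≠ 0 := by
      simp only [zero_mul, sub_zero]; positivity
    rw [hFdef]
    apply DifferentiableAt.sub
    · apply DifferentiableAt.div
      · fun_prop
      · fun_prop
      · exact h1
    · apply DifferentiableAt.div
      · fun_prop
      · fun_prop
      · exact h2
  have hO : (fun s => F s - F 0) =O[nhds 0] (fun s : ℝ => s) := by
    simpa using hFd.isBigO_sub
  have htend : Tendsto (fun ε : ℝ => ε^2) (nhds 0) (nhds 0) := by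
    simpa using ((continuous_pow 2).tendsto (0:ℝ))
  have hcomp : (fun ε : ℝ => F (ε^2) - F 0) =O[nhds 0] (fun ε : ℝ => ε^2) :=
    hO.comp_tendsto htend
  constructor
  · have : (fun ε : ℝ => wkbPhi (fun t => Q t - ε^2 * wkbPhi Q t) x - wkbPhi Q x)
        = fun ε => F (ε^2) - F 0 := funext fun ε => by rw [hFeq ε, hF0]
    rw [this]; exact hcomp
  · have heq : (fun ε : ℝ => ((fun t => Q t - ε^2 * wkbPhi Q t) x
        + ε^2 * wkbPhi (fun t => Q t - ε^2 * wkbPhi Q t) x) - Q x)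
        = fun ε => ε^2 * (F (ε^2) - F 0) := by
      funext ε
      rw [hFeq ε, hF0]
      ring
    rw [heq]
    have := (isBigO_refl (fun ε : ℝ => ε^2) (nhds 0)).mul hcomp
    have heq2 : (fun ε : ℝ => ε^2 * ε^2) = fun ε : ℝ => ε^4 := by
      funext ε; ring
    rw [heq2] at this
    exact this
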